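/- With c_1 = 1 and notation as in the minor criterion, for every k ≥ 1 one has w Q^{-1} (B Q^{-1})^k v = (t(y) P_{n-2}) X^{k-1} y, where y = (-m_2, m_3, ..., (-1)^{n-2} m_{n-1})^T, P_{n-2} is the (n-2)×(n-2) anti-diagonal unit matrix, and X is Q^{-1} with first row and last column deleted. Moreover w Q^{-1} v = c_{n+1} is equivalent to m_n = 0. -/

import Mathlib

open Matrix Finset

noncomputable def M0 (c : ℕ → ℂ) (n : ℕ) : Matrix (Fin n) (Fin n) ℂ :=
  fun i j => if (j : ℕ) ≤ (i : ℕ) + 1 then c ((i : ℕ) + 2 - (j : ℕ)) else 0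

noncomputable def pm (c : ℕ → ℂ) (r : ℕ) : ℂ := (M0 c r).det

noncomputable def Qmat (c : ℕ → ℂ) (s : ℕ) : Matrix (Fin s) (Fin s) ℂ :=
  fun i j => if (j : ℕ) ≤ (i : ℕ) then c ((i : ℕ) + 1 - (j : ℕ)) else 0
/-- The (n-1)×(n-1) upper shift matrix `B`. -/
noncomputable def Bmat (s : ℕ) : Matrix (Fin s) (Fin s) ℂ :=
  fun i j => if (j : ℕ) = (i : ℕ) + 1 then 1 else 0

/-- The s×s anti-diagonal unit matrix `P`. -/
noncomputable def Pmat (s : ℕ) : Matrix (Fin s) (Fin s) ℂ :=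
  fun i j => if (i : ℕ) + (j : ℕ) = s - 1 then 1 else 0

/-- The vector `y = (-m 2, m 3, ..., (-1)^(n-2) m (n-1))`. -/
noncomputable def yvec (c : ℕ → ℂ) (n : ℕ) : Fin (n - 2) → ℂ :=
  fun k => (-1 : ℂ) ^ ((k : ℕ) + 1) * pm c ((k : ℕ) + 2)


lemma neg_one_pow_congr' (a b : ℕ) (h : a % 2 = b % 2) : ((-1 : ℂ)) ^ a = (-1) ^ b := by
  conv_lhs => rw [← Nat.div_add_mod a 2]
  conv_rhs => rw [← Nat.div_add_mod b 2]
  rw [h, pow_add, pow_add, pow_mul, pow_mul]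
  norm_num

lemma sum_ite_range {s i : ℕ} (h : i < s) (f : ℕ → ℂ) :
    ∑ j ∈ Finset.range s, (if j ≤ i then f j else 0) = ∑ j ∈ Finset.range (i+1), f j := by
  rw [Finset.range_eq_Ico, ← Finset.sum_Ico_consecutive _ (Nat.zero_le (i+1)) h,
    ← Finset.range_eq_Ico]
  rw [Finset.sum_Ico_eq_sum_range]
  have h1 : ∑ j ∈ Finset.range (s - (i+1)), (if (i+1) + j ≤ i then f ((i+1)+j) else 0) = 0 := by
    apply Finset.sum_eq_zero; intro x _; simp; omega
  rw [h1, add_zero]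
  apply Finset.sum_congr rfl; intro x hx
  simp only [Finset.mem_range] at hx
  rw [if_pos (by omega)]

lemma minorL (c : ℕ → ℂ) (hc1 : c 1 = 1) :
    ∀ (i r : ℕ) (h : i ≤ r),
      ((M0 c (r+1)).submatrix (⟨i, by omega⟩ : Fin (r+1)).succAbove Fin.succ).det
        = pm c (r - i) := by
  intro i
  induction i with
  | zero =>
    intro r _
    have h0 : (⟨0, by omega⟩ : Fin (r+1)) = 0 := rfl
    rw [h0, Fin.succAbove_zero, Nat.sub_zero]
    have : (M0 c (r+1)).submatrix Fin.succ Fin.succ = M0 c r := by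
      ext a b
      simp only [Matrix.submatrix_apply, M0, Fin.val_succ]
      by_cases hb : (b : ℕ) ≤ (a : ℕ) + 1
      · rw [if_pos (by omega), if_pos hb]
        congr 1; omega
      · rw [if_neg (by omega), if_neg hb]
    rw [this]; rfl
  | succ i ih =>
    intro r hr
    obtain ⟨r', rfl⟩ : ∃ r', r = r' + 1 := ⟨r - 1, by omega⟩
    set S := (M0 c (r'+1+1)).submatrix (⟨i+1, by omega⟩ : Fin (r'+2)).succAbove Fin.succ
      with hS
    have hrow : ∀ j : Fin (r'+1), S 0 j = if j = 0 then 1 else 0 := by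
      intro j
      have h0 : (⟨i+1, by omega⟩ : Fin (r'+2)).succAbove 0 = 0 := by
        rw [Fin.succAbove_of_castSucc_lt]
        · rfl
        · simp [Fin.lt_def]
      simp only [hS, Matrix.submatrix_apply, h0, M0, Fin.val_succ, Fin.val_zero]
      by_cases hj : j = 0
      · subst hj; rw [if_pos (by norm_num)]; simpa using hc1
      · rw [if_neg (by have h' : (j:ℕ) ≠ 0 := fun h => hj (Fin.ext h); omega), if_neg hj]
    rw [Matrix.det_succ_row_zero]
    rw [Finset.sum_eq_single 0]
    · rw [hrow 0, if_pos rfl]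
      have hsub : S.submatrix Fin.succ (Fin.succAbove 0)
          = (M0 c (r'+1)).submatrix (⟨i, by omega⟩ : Fin (r'+1)).succAbove Fin.succ := by
        rw [Fin.succAbove_zero]
        ext a b
        simp only [Matrix.submatrix_apply, hS, M0]
        have hcoe : (((⟨i+1, by omega⟩ : Fin (r'+2)).succAbove a.succ) : ℕ)
            = (((⟨i, by omega⟩ : Fin (r'+1)).succAbove a) : ℕ) + 1 := by
          simp only [Fin.succAbove, Fin.lt_def, Fin.coe_castSucc, Fin.val_succ]
          by_cases hai : (a : ℕ) < i
          · rw [if_pos (by simpa using by omega), if_pos (by simpa using hai)]; simp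
          · rw [if_neg (by simpa using by omega), if_neg (by simpa using hai)]; simp
        rw [hcoe]
        simp only [Fin.val_succ]
        by_cases hb : (b : ℕ) + 1 ≤ ((((⟨i, by omega⟩ : Fin (r'+1)).succAbove a) : ℕ)) + 1
        · rw [if_pos (by omega), if_pos (by omega)]
          congr 1; omega
        · rw [if_neg (by omega), if_neg (by omega)]
      rw [hsub, ih r' (by omega)]
      simp
    · intro j _ hj
      rw [hrow j, if_neg hj]; ring
    · intro h; exact absurd (Finset.mem_univ 0) h

lemma L1 (c : ℕ → ℂ) (hc1 : c 1 = 1) (r : ℕ) :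
    pm c (r+1) = ∑ i ∈ Finset.range (r+1), (-1 : ℂ)^i * c (i+2) * pm c (r - i) := by
  rw [pm, Matrix.det_succ_column_zero,
    ← Fin.sum_univ_eq_sum_range (fun i => (-1 : ℂ)^i * c (i+2) * pm c (r - i)) (r+1)]
  apply Finset.sum_congr rfl
  intro i _
  have h1 : M0 c (r+1) i 0 = c ((i : ℕ)+2) := by simp [M0]
  have h2 := minorL c hc1 (i : ℕ) r (by omega)
  have h3 : (⟨(i:ℕ), by omega⟩ : Fin (r+1)) = i := by simp
  rw [h1, ← h3, h2]

lemma pm_zero (c : ℕ → ℂ) : pm c 0 = 1 := by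
  simp [pm]

lemma LW (c : ℕ → ℂ) (hc1 : c 1 = 1) (M : ℕ) :
    ∑ i ∈ Finset.range M, c (M+1-i) * (-1 : ℂ)^i * pm c (i+1)
      = (-1)^(M+1) * pm c (M+1) + c (M+2) := by
  have h := L1 c hc1 M
  rw [Finset.sum_range_succ, Nat.sub_self, pm_zero, mul_one] at h
  have h2 : ∑ t ∈ Finset.range M, (-1:ℂ)^t * c (t+2) * pm c (M-t)
      = pm c (M+1) - (-1)^M * c (M+2) := by rw [h]; ring
  rw [← Finset.sum_range_reflect]
  have h3 : ∀ i ∈ Finset.range M,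
      c (M+1-(M-1-i)) * (-1:ℂ)^(M-1-i) * pm c ((M-1-i)+1)
        = (-1)^(M+1) * ((-1)^i * c (i+2) * pm c (M-i)) := by
    intro i hi
    simp only [Finset.mem_range] at hi
    have e1 : M+1-(M-1-i) = i+2 := by omega
    have e2 : (M-1-i)+1 = M-i := by omega
    have e3 : ((-1:ℂ))^(M-1-i) = (-1)^(M+1) * (-1)^i := by
      rw [← pow_add]; exact neg_one_pow_congr' _ _ (by omega)
    rw [e1, e2, e3]; ring
  rw [Finset.sum_congr rfl h3, ← Finset.mul_sum, h2]
  have hsq : ((-1:ℂ))^M * (-1)^M = 1 := by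
    rw [← pow_add, show M+M = 2*M by omega, pow_mul]; norm_num
  rw [pow_succ]
  linear_combination c (M+2) * hsq

lemma L3' (c : ℕ → ℂ) (hc1 : c 1 = 1) (N : ℕ) :
    ∑ j ∈ Finset.range (N+1), c (N+1-j) * (-1 : ℂ)^j * pm c (j+1) = c (N+2) := by
  rw [Finset.sum_range_succ, LW c hc1 N]
  have : N + 1 - N = 1 := by omega
  rw [this, hc1, pow_succ]
  ring

lemma detQ (c : ℕ → ℂ) (hc1 : c 1 = 1) (s : ℕ) : (Qmat c s).det = 1 := by
  have hbt : (Qmat c s).BlockTriangular OrderDual.toDual := by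
    intro i j hij
    have hij' : (i : ℕ) < (j : ℕ) := hij
    rw [Qmat, if_neg (by omega)]
  rw [Matrix.det_of_lowerTriangular _ hbt]
  have : ∀ i : Fin s, Qmat c s i i = 1 := by
    intro i; rw [Qmat, if_pos le_rfl]; simpa using hc1
  simp [this]

lemma Pmul_apply (s : ℕ) (A : Matrix (Fin s) (Fin s) ℂ) (i j : Fin s) :
    (Pmat s * A) i j = A ⟨s-1-(i:ℕ), by have := i.isLt; omega⟩ j := by
  rw [Matrix.mul_apply]
  rw [Finset.sum_eq_single (⟨s-1-(i:ℕ), by have := i.isLt; omega⟩ : Fin s)]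
  · rw [Pmat, if_pos (by have := i.isLt; simp; omega), one_mul]
  · intro b _ hb
    have hb' : (b : ℕ) ≠ s - 1 - (i : ℕ) := fun h => hb (Fin.ext h)
    have hne : ¬ ((i:ℕ) + (b:ℕ) = s - 1) := by have := i.isLt; have := b.isLt; omega
    rw [Pmat, if_neg hne, zero_mul]
  · intro h; exact absurd (Finset.mem_univ _) h

lemma mulP_apply (s : ℕ) (A : Matrix (Fin s) (Fin s) ℂ) (i j : Fin s) :
    (A * Pmat s) i j = A i ⟨s-1-(j:ℕ), by have := j.isLt; omega⟩ := by
  rw [Matrix.mul_apply]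
  rw [Finset.sum_eq_single (⟨s-1-(j:ℕ), by have := j.isLt; omega⟩ : Fin s)]
  · rw [Pmat, if_pos (by have := j.isLt; simp; omega), mul_one]
  · intro b _ hb
    have hb' : (b : ℕ) ≠ s - 1 - (j : ℕ) := fun h => hb (Fin.ext h)
    have hne : ¬ ((b:ℕ) + (j:ℕ) = s - 1) := by have := j.isLt; have := b.isLt; omega
    rw [Pmat, if_neg hne, mul_zero]
  · intro h; exact absurd (Finset.mem_univ _) h

lemma vecMulP (s : ℕ) (z : Fin s → ℂ) (j : Fin s) :
    (z ᵥ* Pmat s) j = z ⟨s-1-(j:ℕ), by have := j.isLt; omega⟩ := by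
  rw [Matrix.vecMul, dotProduct]
  rw [Finset.sum_eq_single (⟨s-1-(j:ℕ), by have := j.isLt; omega⟩ : Fin s)]
  · rw [Pmat, if_pos (by have := j.isLt; simp; omega), mul_one]
  · intro b _ hb
    have hb' : (b : ℕ) ≠ s - 1 - (j : ℕ) := fun h => hb (Fin.ext h)
    have hne : ¬ ((b:ℕ) + (j:ℕ) = s - 1) := by have := j.isLt; have := b.isLt; omega
    rw [Pmat, if_neg hne, mul_zero]
  · intro h; exact absurd (Finset.mem_univ _) h

lemma PPeq (s : ℕ) : Pmat s * Pmat s = 1 := by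
  ext i j
  rw [Pmul_apply, Pmat, Matrix.one_apply]
  have hi := i.isLt; have hj := j.isLt
  by_cases h : i = j
  · subst h; rw [if_pos (by simp; omega), if_pos rfl]
  · rw [if_neg (by simp; intro hh; exact h (by apply Fin.ext; omega)), if_neg h]

lemma PQP (c : ℕ → ℂ) (s : ℕ) : Pmat s * Qmat c s * Pmat s = (Qmat c s)ᵀ := by
  ext i j
  rw [mulP_apply, Pmul_apply, Matrix.transpose_apply, Qmat, Qmat]
  have hi := i.isLt; have hj := j.isLt
  by_cases h : (i : ℕ) ≤ (j : ℕ)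
  · rw [if_pos (show ((⟨s-1-(j:ℕ), _⟩ : Fin s) : ℕ) ≤ ((⟨s-1-(i:ℕ), _⟩ : Fin s) : ℕ) by simp; omega), if_pos h]
    congr 1; simp; omega
  · rw [if_neg (show ¬ ((⟨s-1-(j:ℕ), _⟩ : Fin s) : ℕ) ≤ ((⟨s-1-(i:ℕ), _⟩ : Fin s) : ℕ) by simp; omega), if_neg h]

theorem stmt_main (m : ℕ) (c : ℕ → ℂ) (hc1 : c 1 = 1)
    (X : Matrix (Fin (m+1)) (Fin (m+1)) ℂ)
    (hX' : ∀ i j : Fin (m+1), X i j = (Qmat c (m+2))⁻¹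
      ⟨(i:ℕ)+1, by have := i.isLt; omega⟩ ⟨(j:ℕ), by have := j.isLt; omega⟩) :
    (∀ k, 1 ≤ k →
      (fun i : Fin (m+2) => c (m + 3 - (i:ℕ))) ⬝ᵥ
        (((Qmat c (m+2))⁻¹ * (Bmat (m+2) * (Qmat c (m+2))⁻¹) ^ k) *ᵥ
          fun i : Fin (m+2) => c ((i:ℕ) + 2))
      = (yvec c (m+3) : Fin (m+1) → ℂ) ⬝ᵥ
          ((Pmat (m+1) * X ^ (k - 1)) *ᵥ (yvec c (m+3) : Fin (m+1) → ℂ))) ∧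
    ((fun i : Fin (m+2) => c (m + 3 - (i:ℕ))) ⬝ᵥ
        ((Qmat c (m+2))⁻¹ *ᵥ fun i : Fin (m+2) => c ((i:ℕ) + 2)) = c (m + 4)
      ↔ pm c (m+3) = 0) := by
  set Q := Qmat c (m+2) with hQdef
  set R := Q⁻¹ with hR
  have hdet : IsUnit Q.det := by rw [hQdef, detQ c hc1]; exact isUnit_one
  have hRQ : R * Q = 1 := Matrix.nonsing_inv_mul _ hdet
  have hQu : Q *ᵥ (fun i : Fin (m+2) => (-1:ℂ)^(i:ℕ) * pm c ((i:ℕ)+1))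
      = (fun i : Fin (m+2) => c ((i:ℕ)+2)) := by
    funext i
    simp only [hQdef, Matrix.mulVec, dotProduct, Qmat]
    rw [Fin.sum_univ_eq_sum_range
      (fun j => (if j ≤ (i:ℕ) then c ((i:ℕ)+1-j) else 0) * ((-1:ℂ)^j * pm c (j+1))) (m+2)]
    have hstep : ∀ j ∈ Finset.range (m+2),
        (if j ≤ (i:ℕ) then c ((i:ℕ)+1-j) else 0) * ((-1:ℂ)^j * pm c (j+1))
          = if j ≤ (i:ℕ) then c ((i:ℕ)+1-j) * (-1:ℂ)^j * pm c (j+1) else 0 := by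
      intro j _; split <;> ring
    rw [Finset.sum_congr rfl hstep, sum_ite_range i.isLt, L3' c hc1 (i:ℕ)]
  have huv : R *ᵥ (fun i : Fin (m+2) => c ((i:ℕ)+2))
      = (fun i : Fin (m+2) => (-1:ℂ)^(i:ℕ) * pm c ((i:ℕ)+1)) := by
    rw [← hQu, Matrix.mulVec_mulVec, hRQ, Matrix.one_mulVec]
  have hPR : Pmat (m+2) * R = Rᵀ * Pmat (m+2) := by
    have h1 : Rᵀ = Pmat (m+2) * R * Pmat (m+2) := by
      rw [hR, Matrix.transpose_nonsing_inv, hQdef, ← PQP c (m+2),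
        Matrix.mul_inv_rev, Matrix.mul_inv_rev,
        Matrix.inv_eq_right_inv (PPeq (m+2))]
      rw [← hQdef, ← hR]
      noncomm_ring
    rw [h1, mul_assoc (Pmat (m+2) * R), PPeq, mul_one]
  have hwR : (fun i : Fin (m+2) => c (m+3-(i:ℕ))) ᵥ* R
      = (fun i : Fin (m+2) => (-1:ℂ)^(i:ℕ) * pm c ((i:ℕ)+1)) ᵥ* Pmat (m+2) := by
    have hw : (fun i : Fin (m+2) => c (m+3-(i:ℕ)))
        = (fun i : Fin (m+2) => c ((i:ℕ)+2)) ᵥ* Pmat (m+2) := by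
      funext j
      rw [vecMulP]
      have := j.isLt
      congr 1
      simp only []
      omega
    rw [hw, Matrix.vecMul_vecMul, hPR, ← Matrix.vecMul_vecMul,
      Matrix.vecMul_transpose, huv]
  constructor
  · -- part 1
    intro k hk
    obtain ⟨k', rfl⟩ : ∃ k', k = k' + 1 := ⟨k-1, by omega⟩
    simp only [Nat.add_sub_cancel]
    set F : Matrix (Fin (m+2)) (Fin (m+1)) ℂ := Matrix.of (fun i j => R i j.castSucc) with hF
    have hRB : ∀ z : Fin (m+2) → ℂ,
        (R * Bmat (m+2)) *ᵥ z = F *ᵥ (fun j : Fin (m+1) => z j.succ) := by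
      intro z
      funext i
      rw [← Matrix.mulVec_mulVec]
      simp only [Matrix.mulVec, dotProduct, hF, Matrix.of_apply]
      rw [Fin.sum_univ_castSucc (n := m+1)]
      have hB1 : ∀ j : Fin (m+1),
          (∑ j' : Fin (m+2), Bmat (m+2) j.castSucc j' * z j') = z j.succ := by
        intro j
        rw [Finset.sum_eq_single j.succ]
        · rw [Bmat, if_pos (by simp), one_mul]
        · intro b _ hb
          rw [Bmat, if_neg (fun h => hb (Fin.ext (by simpa using h))), zero_mul]
        · intro h; exact absurd (Finset.mem_univ _) h
      have hlast : (∑ j' : Fin (m+2), Bmat (m+2) (Fin.last (m+1)) j' * z j') = 0 := by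
        apply Finset.sum_eq_zero
        intro x _
        rw [Bmat, if_neg (by have := x.isLt; simp [Fin.last]; omega), zero_mul]
      rw [hlast, mul_zero, add_zero]
      exact Finset.sum_congr rfl (fun j _ => by rw [hB1])
    have hFsucc : ∀ z' : Fin (m+1) → ℂ,
        (fun j : Fin (m+1) => (F *ᵥ z') j.succ) = X *ᵥ z' := by
      intro z'
      funext j
      simp only [Matrix.mulVec, dotProduct, hF, Matrix.of_apply]
      apply Finset.sum_congr rfl
      intro l _
      congr 1
      rw [hX' j l]
      rfl
    have hiter : ∀ k : ℕ,
        ((R * Bmat (m+2))^(k+1)) *ᵥ (fun i : Fin (m+2) => (-1:ℂ)^(i:ℕ) * pm c ((i:ℕ)+1))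
          = F *ᵥ ((X^k) *ᵥ yvec c (m+3)) := by
      intro k
      induction k with
      | zero =>
        rw [pow_one, pow_zero, Matrix.one_mulVec, hRB]
        congr 1
      | succ k ih =>
        rw [pow_succ', ← Matrix.mulVec_mulVec, ih, hRB, hFsucc]
        conv_rhs => rw [pow_succ', ← Matrix.mulVec_mulVec]
    have hsemi : SemiconjBy R (Bmat (m+2) * R) (R * Bmat (m+2)) :=
      (mul_assoc R (Bmat (m+2)) R).symm
    have hsw := hsemi.pow_right (k'+1)
    rw [show R * (Bmat (m+2) * R)^(k'+1) = (R * Bmat (m+2))^(k'+1) * R from hsw,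
      ← Matrix.mulVec_mulVec, huv, hiter k', dotProduct_mulVec,
      dotProduct_mulVec, dotProduct_mulVec, ← Matrix.vecMul_vecMul]
    suffices hsuf : (fun i : Fin (m+2) => c (m+3-(i:ℕ))) ᵥ* F
        = (yvec c (m+3) : Fin (m+1) → ℂ) ᵥ* Pmat (m+1) by rw [hsuf]
    funext j
    have hL : ((fun i : Fin (m+2) => c (m+3-(i:ℕ))) ᵥ* F) j
        = ((fun i : Fin (m+2) => c (m+3-(i:ℕ))) ᵥ* R) j.castSucc := by
      simp only [Matrix.vecMul, dotProduct, hF, Matrix.of_apply]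
    rw [hL, hwR, vecMulP]
    have hyP := vecMulP (m+1) (yvec c (m+3) : Fin (m+1) → ℂ) j
    rw [hyP]
    have hj := j.isLt
    simp only [yvec, Fin.coe_castSucc]
    have ea : m+2-1-(j:ℕ) = (m+1-1-(j:ℕ))+1 := by omega
    rw [ea]
  · -- part 2
    rw [huv]
    have hcal : (fun i : Fin (m+2) => c (m+3-(i:ℕ))) ⬝ᵥ
        (fun i : Fin (m+2) => (-1:ℂ)^(i:ℕ) * pm c ((i:ℕ)+1))
          = (-1:ℂ)^(m+3) * pm c (m+3) + c (m+4) := by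
      rw [dotProduct]
      rw [Fin.sum_univ_eq_sum_range (fun j => c (m+3-j) * ((-1:ℂ)^j * pm c (j+1))) (m+2)]
      have := LW c hc1 (m+2)
      rw [← this]
      apply Finset.sum_congr rfl
      intro j _
      ring
    rw [hcal]
    constructor
    · intro h
      have h2 : (-1:ℂ)^(m+3) * pm c (m+3) = 0 := by
        linear_combination h
      rcases mul_eq_zero.mp h2 with h3 | h3
      · exact absurd h3 (pow_ne_zero _ (by norm_num))
      · exact h3
    · intro h
      rw [h]
      ring


/-- For every `k ≥ 1`, `w Q⁻¹ (B Q⁻¹)^k v = (ᵗy P) X^(k-1) y`, where `X` is `Q⁻¹` with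
the first row and last column deleted; moreover `w Q⁻¹ v = c (n+1)` iff `m n = 0`. -/
theorem stmt11 (n : ℕ) (hn : 3 ≤ n) (c : ℕ → ℂ) (hc1 : c 1 = 1)
    (hc : ∀ k, 2 ≤ k → k ≤ n + 1 → c k ≠ 0)
    (X : Matrix (Fin (n - 2)) (Fin (n - 2)) ℂ)
    (hX : ∀ i j : Fin (n - 2),
      X i j = (Qmat c (n - 1))⁻¹ ⟨(i : ℕ) + 1, by have := i.isLt; omega⟩
                                  ⟨(j : ℕ), by have := j.isLt; omega⟩) :
    (∀ k, 1 ≤ k →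
      (fun i : Fin (n - 1) => c (n - (i : ℕ))) ⬝ᵥ
        (((Qmat c (n - 1))⁻¹ * (Bmat (n - 1) * (Qmat c (n - 1))⁻¹) ^ k) *ᵥ
          fun i : Fin (n - 1) => c ((i : ℕ) + 2))
      = yvec c n ⬝ᵥ ((Pmat (n - 2) * X ^ (k - 1)) *ᵥ yvec c n)) ∧
    ((fun i : Fin (n - 1) => c (n - (i : ℕ))) ⬝ᵥ
        ((Qmat c (n - 1))⁻¹ *ᵥ fun i : Fin (n - 1) => c ((i : ℕ) + 2)) = c (n + 1)
      ↔ pm c n = 0) := by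
  obtain ⟨m, rfl⟩ : ∃ m, n = m + 3 := ⟨n - 3, by omega⟩
  exact stmt_main m c hc1 X (fun i j => hX i j)
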